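/- Let K be a number field and k the order of the group of roots of unity in K. If π₁ and π₂ are Weil q-numbers in K (algebraic integers all of whose complex embeddings have absolute value q^{1/2}) such that v(π₁) = v(π₂) for every p-adic valuation v of K, then π₁^k = π₂^k. -/

import Mathlib

open NumberField IsDedekindDomain Module


lemma self_dvd_algebraMap_norm {R S : Type*} [CommRing R] [CommRing S] [Algebra R S]
    [Module.Free R S] [Module.Finite R S] (a : S) :
    a ∣ algebraMap R S (Algebra.norm R a) := by
  have hdvd : a ∣ algebraMap R S ((Algebra.lmul R S a).charpoly.coeff 0) := by
    have h0 : Polynomial.aeval a (Algebra.lmul R S a).charpoly = 0 := by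
      have h1 := LinearMap.aeval_self_charpoly (Algebra.lmul R S a)
      have h2 : Polynomial.aeval (Algebra.lmul R S a) (Algebra.lmul R S a).charpoly
          = Algebra.lmul R S (Polynomial.aeval a (Algebra.lmul R S a).charpoly) :=
        Polynomial.aeval_algHom_apply (Algebra.lmul R S) a _
      have h3 := congrArg (fun f => f 1) (h2.symm.trans h1)
      simpa using h3
    have h5 := congrArg (Polynomial.aeval a)
      (Polynomial.divX_mul_X_add (Algebra.lmul R S a).charpoly)
    rw [map_add, map_mul, Polynomial.aeval_X, Polynomial.aeval_C, h0] at h5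
    exact ⟨-(Polynomial.aeval a (Polynomial.divX (Algebra.lmul R S a).charpoly)),
      by linear_combination h5⟩
  rw [Algebra.norm_apply, LinearMap.det_eq_sign_charpoly_coeff, map_mul]
  exact Dvd.dvd.mul_left hdvd _

lemma dvd_of_intValuation_le {R : Type*} [CommRing R] [IsDedekindDomain R]
    {a b : R} (ha : a ≠ 0) (hb : b ≠ 0)
    (h : ∀ v : HeightOneSpectrum R,
      v.intValuationDef a ≤ v.intValuationDef b) :
    b ∣ a := by
  classical
  have hA : (Ideal.span {a} : Ideal R) ≠ 0 := by
    simpa [Ideal.zero_eq_bot, Ideal.span_singleton_eq_bot] using ha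
  have hB : (Ideal.span {b} : Ideal R) ≠ 0 := by
    simpa [Ideal.zero_eq_bot, Ideal.span_singleton_eq_bot] using hb
  rw [← Ideal.span_singleton_le_span_singleton, ← Ideal.dvd_iff_le, ← Associates.mk_dvd_mk]
  suffices hle : @LE.le (Associates (Ideal R)) Associates.instPreorder.toLE (Associates.mk (Ideal.span {b})) (Associates.mk (Ideal.span {a})) from hle
  rw [← Associates.factors_le, Associates.factors_mk _ hB,
    Associates.factors_mk _ hA, WithTop.coe_le_coe, Multiset.le_iff_count]
  rintro ⟨P, hP⟩
  obtain ⟨I, rfl⟩ := Associates.exists_rep P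
  have hirr : Irreducible I := Associates.irreducible_mk.mp hP
  have hprime : Prime I := UniqueFactorizationMonoid.irreducible_iff_prime.mp hirr
  set v : HeightOneSpectrum R := ⟨I, Ideal.isPrime_of_prime hprime, hprime.ne_zero⟩
  have hcount : (Associates.mk I).count (Associates.mk (Ideal.span {b})).factors ≤
      (Associates.mk I).count (Associates.mk (Ideal.span {a})).factors := by
    have h' := h v
    rw [v.intValuationDef_if_neg ha, v.intValuationDef_if_neg hb, WithZero.exp_le_exp,
      neg_le_neg_iff, Int.ofNat_le] at h'
    exact h'
  rwa [← Associates.count_some hP, ← Associates.count_some hP,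
    ← Associates.factors_mk _ hA, ← Associates.factors_mk _ hB]

lemma unit_pow_torsionOrder {K : Type*} [Field K] [NumberField K] (u : (𝓞 K)ˣ)
    (hu : ∀ φ : K →+* ℂ, ‖φ ((u : 𝓞 K) : K)‖ = 1) :
    u ^ (NumberField.Units.torsionOrder K : ℕ) = 1 := by
  have hmem : u ∈ NumberField.Units.torsion K := by
    rw [NumberField.Units.mem_torsion]
    intro w
    rw [← w.norm_embedding_eq]
    exact hu w.embedding
  have h : (⟨u, hmem⟩ : NumberField.Units.torsion K) ^ Nat.card (NumberField.Units.torsion K) = 1 :=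
    pow_card_eq_one'
  have h2 : u ^ Nat.card (NumberField.Units.torsion K) = 1 := by
    have h3 := congrArg Subtype.val h
    rwa [SubmonoidClass.coe_pow, OneMemClass.coe_one] at h3
  simpa [NumberField.Units.torsionOrder] using h2
lemma norm_sq_eq (q : ℕ) {K : Type*} [Field K] [NumberField K] (a : 𝓞 K)
    (hw : ∀ σ : K →+* ℂ, ‖σ (a : K)‖ = Real.sqrt q) :
    (Algebra.norm ℤ a) ^ 2 = (q : ℤ) ^ finrank ℚ K := by
  have hq0 : (0:ℝ) ≤ q := Nat.cast_nonneg q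
  have habs : ‖(algebraMap ℚ ℂ) (Algebra.norm ℚ (a : K))‖ = Real.sqrt q ^ finrank ℚ K := by
    rw [Algebra.norm_eq_prod_embeddings, norm_prod]
    rw [Finset.prod_congr rfl (fun σ _ => hw σ.toRingHom)]
    simp [AlgHom.card]
  have hcoe : ((Algebra.norm ℤ a) : ℚ) = Algebra.norm ℚ (a : K) :=
    Algebra.coe_norm_int a
  have h2 : |((Algebra.norm ℤ a : ℚ) : ℝ)| = Real.sqrt q ^ finrank ℚ K := by
    rw [hcoe, ← habs]
    rw [eq_ratCast (algebraMap ℚ ℂ), ← Complex.ofReal_ratCast,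
      Complex.norm_real, Real.norm_eq_abs]
  have h3 : (((Algebra.norm ℤ a : ℚ) : ℝ)) ^ 2 = (q:ℝ) ^ finrank ℚ K := by
    rw [← sq_abs, h2, ← pow_mul, mul_comm, pow_mul, Real.sq_sqrt hq0]
  exact_mod_cast h3

lemma key_valuation (p q : ℕ) (hp : p.Prime) (hpq : ∃ n, q = p ^ n)
    {K : Type*} [Field K] [NumberField K] (a : 𝓞 K)
    (hw : ∀ σ : K →+* ℂ, ‖σ (a : K)‖ = Real.sqrt q)
    (v : HeightOneSpectrum (𝓞 K)) (hv : (p : 𝓞 K) ∉ v.asIdeal) :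
    v.intValuationDef a = 1 := by
  obtain ⟨n, rfl⟩ := hpq
  set d := finrank ℚ K with hd
  have hdvd : a ∣ (p : 𝓞 K) ^ (n * d) := by
    have h1 : a ∣ algebraMap ℤ (𝓞 K) (Algebra.norm ℤ a) := self_dvd_algebraMap_norm a
    have h2 : algebraMap ℤ (𝓞 K) (Algebra.norm ℤ a) ∣
        algebraMap ℤ (𝓞 K) ((Algebra.norm ℤ a) ^ 2) := by
      rw [map_pow]
      exact dvd_pow_self _ (by norm_num)
    have h3 := h1.trans h2
    have h4 : algebraMap ℤ (𝓞 K) ((Algebra.norm ℤ a) ^ 2) = (p : 𝓞 K) ^ (n * d) := by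
      rw [norm_sq_eq (p ^ n) a hw]
      push_cast
      rw [← pow_mul]
    rwa [h4] at h3
  refine le_antisymm (v.intValuation_le_one a) ?_
  by_contra hlt
  rw [not_le] at hlt
  have hmem : a ∈ v.asIdeal := by
    have := (v.intValuation_lt_one_iff_dvd a).mp hlt
    rwa [Ideal.dvd_span_singleton] at this
  obtain ⟨c, hc⟩ := hdvd
  have hpow : (p : 𝓞 K) ^ (n * d) ∈ v.asIdeal := hc ▸ Ideal.mul_mem_right _ _ hmem
  exact hv (v.isPrime.mem_of_pow_mem _ hpow)

set_option maxHeartbeats 1000000 in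
set_option synthInstance.maxHeartbeats 400000 in
/-- Let `K` be a number field and `k` the order of the group of roots of
unity in `K`. If `π₁` and `π₂` are Weil `q`-numbers in `K` (algebraic integers all of whose
complex embeddings have absolute value `q^(1/2)`) such that `v(π₁) = v(π₂)` for every
`p`-adic valuation `v` of `K`, then `π₁ ^ k = π₂ ^ k`. -/
theorem stmt0 (p n q : ℕ) (hp : p.Prime) (hn : 0 < n) (hq : q = p ^ n)
    (K : Type*) [Field K] [NumberField K] (π₁ π₂ : K)
    (h₁ : IsIntegral ℤ π₁) (h₂ : IsIntegral ℤ π₂)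
    (hw₁ : ∀ σ : K →+* ℂ, ‖σ π₁‖ = Real.sqrt q)
    (hw₂ : ∀ σ : K →+* ℂ, ‖σ π₂‖ = Real.sqrt q)
    (hval : ∀ v : HeightOneSpectrum (𝓞 K),
      (p : 𝓞 K) ∈ v.asIdeal → v.valuation K π₁ = v.valuation K π₂) :
    π₁ ^ (NumberField.Units.torsionOrder K : ℕ) =
      π₂ ^ (NumberField.Units.torsionOrder K : ℕ) := by
  classical
  have hq0 : (0:ℝ) < Real.sqrt q := Real.sqrt_pos.mpr (by
    rw [hq]; exact_mod_cast pow_pos hp.pos n)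
  have hcard : 0 < Fintype.card (K →+* ℂ) := by
    rw [NumberField.Embeddings.card K ℂ]; exact Module.finrank_pos
  obtain ⟨σ₀⟩ := Fintype.card_pos_iff.mp hcard
  have hπ₁ : π₁ ≠ 0 := by
    intro h
    have h' := hw₁ σ₀
    rw [h, map_zero, norm_zero] at h'
    linarith
  have hπ₂ : π₂ ≠ 0 := by
    intro h
    have h' := hw₂ σ₀
    rw [h, map_zero, norm_zero] at h'
    linarith
  have ha₁ : (⟨π₁, h₁⟩ : 𝓞 K) ≠ 0 := by
    intro h
    exact hπ₁ (congrArg (algebraMap (𝓞 K) K) h)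
  have ha₂ : (⟨π₂, h₂⟩ : 𝓞 K) ≠ 0 := by
    intro h
    exact hπ₂ (congrArg (algebraMap (𝓞 K) K) h)
  have hvv : ∀ v : HeightOneSpectrum (𝓞 K),
      v.intValuationDef (⟨π₁, h₁⟩ : 𝓞 K) = v.intValuationDef (⟨π₂, h₂⟩ : 𝓞 K) := by
    intro v
    by_cases hpv : (p : 𝓞 K) ∈ v.asIdeal
    · have h' := hval v hpv
      exact (v.valuation_of_algebraMap (K := K) (⟨π₁, h₁⟩ : 𝓞 K)).symm.trans
        (h'.trans (v.valuation_of_algebraMap (K := K) (⟨π₂, h₂⟩ : 𝓞 K)))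
    · rw [key_valuation p q hp ⟨n, hq⟩ ⟨π₁, h₁⟩ hw₁ v hpv,
        key_valuation p q hp ⟨n, hq⟩ ⟨π₂, h₂⟩ hw₂ v hpv]
  obtain ⟨c, hc⟩ := dvd_of_intValuation_le (R := 𝓞 K) ha₁ ha₂ (fun v => le_of_eq (hvv v))
  obtain ⟨e, he⟩ := dvd_of_intValuation_le (R := 𝓞 K) ha₂ ha₁ (fun v => le_of_eq (hvv v).symm)
  have hce : c * e = 1 := by
    haveI : IsLeftCancelMulZero (𝓞 K) := IsDomain.toIsCancelMulZero.toIsLeftCancelMulZero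
    refine @mul_left_cancel₀ (𝓞 K) _ _ this _ _ _ ha₂ ?_
    exact (mul_assoc _ _ _).symm.trans ((congrArg (· * e) hc.symm).trans (he.symm.trans (mul_one _).symm))
  have hcK : π₁ = π₂ * (algebraMap (𝓞 K) K c) := by
    exact (congrArg (algebraMap (𝓞 K) K) hc).trans (map_mul _ _ _)
  have hnorm : ∀ σ : K →+* ℂ, ‖σ (algebraMap (𝓞 K) K c)‖ = 1 := by
    intro σ
    have h' := hw₁ σ
    rw [hcK, map_mul, norm_mul, hw₂ σ] at h'
    have : Real.sqrt q * ‖σ (algebraMap (𝓞 K) K c)‖ = Real.sqrt q * 1 := by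
      rw [mul_one]; exact h'
    exact mul_left_cancel₀ (ne_of_gt hq0) this
  have hu := unit_pow_torsionOrder ⟨c, e, hce, mul_comm c e ▸ hce⟩ hnorm
  have hcpow : c ^ (NumberField.Units.torsionOrder K : ℕ) = 1 := by
    have := congrArg (fun x : (𝓞 K)ˣ => (x : 𝓞 K)) hu
    simpa using this
  have hKpow : (algebraMap (𝓞 K) K c) ^ (NumberField.Units.torsionOrder K : ℕ) = 1 := by
    rw [← map_pow, hcpow, map_one]
  rw [hcK, mul_pow, hKpow, mul_one]
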